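/- For every fixed number N ≥ 2 of relays and every M > 0, there exist a rate R_s > 0 and marginal cost functions λ_1,…,λ_N : [0,R_s] → ℝ, each positive, continuous, strictly increasing, and convex, such that the resulting oligopoly pricing game has an equilibrium whose induced cost is at least M times the socially optimal cost. -/

import Mathlib

open Finset MeasureTheory intervalIntegral Set

/-- Virtual-competitor cost function: the minimal total cost of splitting traffic `t`
among the relays other than `i`, given pricing functions `B`. -/
noncomputable def Bhat (N : ℕ) (B : Fin N → ℝ → ℝ) (i : Fin N) (t : ℝ) : ℝ :=
  sInf {c : ℝ | ∃ g : Fin N → ℝ, (∀ j, 0 ≤ g j) ∧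
    (∑ j ∈ Finset.univ.erase i, g j) = t ∧ c = ∑ j ∈ Finset.univ.erase i, B j (g j)}

/-- A routing of total rate `Rs` among `N` relays. -/
def IsRouting (N : ℕ) (Rs : ℝ) (f : Fin N → ℝ) : Prop :=
  (∀ i, 0 ≤ f i) ∧ (∑ i, f i) = Rs

/-- The network cost of a routing. -/
noncomputable def totalCost (N : ℕ) (lam : Fin N → ℝ → ℝ) (f : Fin N → ℝ) : ℝ :=
  ∑ i, ∫ r in (0:ℝ)..(f i), lam i r

/-- The socially optimal routing: a routing of minimum cost. -/
def IsSociallyOptimal (N : ℕ) (Rs : ℝ) (lam : Fin N → ℝ → ℝ) (f : Fin N → ℝ) : Prop :=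
  IsRouting N Rs f ∧ ∀ g, IsRouting N Rs g → totalCost N lam f ≤ totalCost N lam g

/-- An oligopoly pricing game: at least two relays, positive rate, and marginal cost
functions that are positive, continuous and strictly increasing on `[0, Rs]`. -/
def IsOligopoly (N : ℕ) (Rs : ℝ) (lam : Fin N → ℝ → ℝ) : Prop :=
  2 ≤ N ∧ 0 < Rs ∧ ∀ i,
    (∀ t ∈ Set.Icc (0:ℝ) Rs, 0 < lam i t) ∧
    ContinuousOn (lam i) (Set.Icc 0 Rs) ∧
    StrictMonoOn (lam i) (Set.Icc 0 Rs)

/-- A pricing profile: each relay's pricing function is continuous, nondecreasing,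
and vanishes at `0`. -/
def IsPricingProfile (N : ℕ) (Rs : ℝ) (B : Fin N → ℝ → ℝ) : Prop :=
  ∀ i, ContinuousOn (B i) (Set.Icc 0 Rs) ∧ MonotoneOn (B i) (Set.Icc 0 Rs) ∧ B i 0 = 0

/-- Equilibrium of the oligopoly pricing game. -/
def IsEquilibrium (N : ℕ) (Rs : ℝ) (lam B : Fin N → ℝ → ℝ) (f : Fin N → ℝ) : Prop :=
  IsPricingProfile N Rs B ∧ IsRouting N Rs f ∧
  (∀ g, IsRouting N Rs g → (∑ i, B i (f i)) ≤ ∑ i, B i (g i)) ∧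
  (∀ i, ∀ t ∈ Set.Icc (0:ℝ) Rs, Bhat N B i Rs - Bhat N B i (Rs - t) ≤ B i t) ∧
  (∀ i, B i (f i) = Bhat N B i Rs - Bhat N B i (Rs - f i)) ∧
  (∀ i, ∀ t ∈ Set.Icc (0:ℝ) Rs,
    Bhat N B i Rs - Bhat N B i (Rs - t) - (∫ r in (0:ℝ)..t, lam i r) ≤
    Bhat N B i Rs - Bhat N B i (Rs - f i) - ∫ r in (0:ℝ)..(f i), lam i r)

/-- A function having one-sided derivatives: a right derivative at every point of
`[0, Rs)` and a left derivative at every point of `(0, Rs]`. -/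
def HasOneSidedDerivs (Rs : ℝ) (F : ℝ → ℝ) : Prop :=
  (∀ t ∈ Set.Ico (0:ℝ) Rs, ∃ d, HasDerivWithinAt F d (Set.Ici t) t) ∧
  (∀ t ∈ Set.Ioc (0:ℝ) Rs, ∃ d, HasDerivWithinAt F d (Set.Iic t) t)

/-- For every `N ≥ 2` and `M > 0` there is an oligopoly pricing game with
convex (positive, continuous, strictly increasing) marginal cost functions possessing an
equilibrium whose cost is at least `M` times the socially optimal cost. -/

noncomputable def Lf (c : ℝ) (k : ℕ) (x : ℝ) : ℝ := c * x + ((k:ℝ)+1)⁻¹ * x^(k+1)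

noncomputable def Bf (c : ℝ) (k : ℕ) (t : ℝ) : ℝ := Lf c k 1 - Lf c k (1 - t)

lemma Lf_zero (c : ℝ) (k : ℕ) : Lf c k 0 = 0 := by simp [Lf]

lemma Bf_zero (c : ℝ) (k : ℕ) : Bf c k 0 = 0 := by simp [Bf]

lemma integral_lam (c : ℝ) (k : ℕ) (x : ℝ) :
    (∫ r in (0:ℝ)..x, (c + r^k)) = Lf c k x := by
  rw [intervalIntegral.integral_add intervalIntegrable_const (intervalIntegrable_pow k),
    intervalIntegral.integral_const, integral_pow]
  simp [Lf]
  push_cast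
  ring

lemma pow_diff_mono (p : ℕ) {x y a : ℝ} (hx : 0 ≤ x) (ha : 0 ≤ a) (hxy : x ≤ y) :
    (x+a)^p - x^p ≤ (y+a)^p - y^p := by
  have hy : 0 ≤ y := hx.trans hxy
  have hb : ∀ z : ℝ, (z+a)^p - z^p = ∑ m ∈ Finset.range p, z^m * a^(p-m) * (p.choose m) := by
    intro z
    rw [add_pow, Finset.sum_range_succ]
    simp
  rw [hb x, hb y]
  apply Finset.sum_le_sum
  intro m _
  have h1 : x^m ≤ y^m := pow_le_pow_left₀ hx hxy m
  have h2 : (0:ℝ) ≤ a^(p-m) * (p.choose m) := by positivity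
  nlinarith [pow_nonneg hx m]

lemma Bf_pair (c : ℝ) (k : ℕ) {x y : ℝ} (hx : 0 ≤ x) (hy : 0 ≤ y) (hxy : x + y ≤ 1) :
    Bf c k (x + y) ≤ Bf c k x + Bf c k y := by
  have hw : 0 ≤ 1 - x - y := by linarith
  have h := pow_diff_mono (k+1) hw hx (by linarith : 1 - x - y ≤ 1 - x)
  have e1 : 1 - x - y + x = 1 - y := by ring
  have e2 : 1 - x + x = 1 := by ring
  rw [e1, e2] at h
  have hq : (0:ℝ) ≤ ((k:ℝ)+1)⁻¹ := by positivity
  have h2 := mul_le_mul_of_nonneg_left h hq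
  simp only [Bf, Lf]
  have e3 : 1 - (x + y) = 1 - x - y := by ring
  rw [e3]
  nlinarith [h2]

lemma Bf_sum {N : ℕ} (c : ℝ) (k : ℕ) (s : Finset (Fin N)) (g : Fin N → ℝ)
    (hg : ∀ j, 0 ≤ g j) (hs : ∑ j ∈ s, g j ≤ 1) :
    Bf c k (∑ j ∈ s, g j) ≤ ∑ j ∈ s, Bf c k (g j) := by
  induction s using Finset.cons_induction with
  | empty => simp [Bf_zero]
  | cons a s ha ih =>
    rw [Finset.sum_cons] at hs ⊢
    rw [Finset.sum_cons]
    have h1 : 0 ≤ ∑ j ∈ s, g j := Finset.sum_nonneg (fun j _ => hg j)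
    have hs' : ∑ j ∈ s, g j ≤ 1 := by linarith [hg a]
    have h2 := Bf_pair c k (hg a) h1 hs
    linarith [ih hs']

lemma Bhat_eq {N : ℕ} (hN : 2 ≤ N) (c : ℝ) (k : ℕ) (i : Fin N) {t : ℝ}
    (ht0 : 0 ≤ t) (ht1 : t ≤ 1) :
    Bhat N (fun _ => Bf c k) i t = Bf c k t := by
  have hcard : 1 < Fintype.card (Fin N) := by rw [Fintype.card_fin]; omega
  obtain ⟨j0, hj0⟩ := Fintype.exists_ne_of_one_lt_card hcard i
  have hj0mem : j0 ∈ Finset.univ.erase i := Finset.mem_erase.2 ⟨hj0, Finset.mem_univ _⟩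
  have hmem : Bf c k t ∈ {c' : ℝ | ∃ g : Fin N → ℝ, (∀ j, 0 ≤ g j) ∧
      (∑ j ∈ Finset.univ.erase i, g j) = t ∧ c' = ∑ j ∈ Finset.univ.erase i, Bf c k (g j)} := by
    refine ⟨fun j => if j = j0 then t else 0, fun j => by by_cases h : j = j0 <;> simp [h, ht0], ?_, ?_⟩
    · rw [Finset.sum_ite_eq']; simp [hj0mem]
    · rw [show (∑ j ∈ Finset.univ.erase i, Bf c k (if j = j0 then t else 0)) =
        ∑ j ∈ Finset.univ.erase i, (if j = j0 then Bf c k t else 0) from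
        Finset.sum_congr rfl (fun j _ => by split <;> simp [Bf_zero]),
        Finset.sum_ite_eq']
      simp [hj0mem]
  have hlb : ∀ z ∈ {c' : ℝ | ∃ g : Fin N → ℝ, (∀ j, 0 ≤ g j) ∧
      (∑ j ∈ Finset.univ.erase i, g j) = t ∧ c' = ∑ j ∈ Finset.univ.erase i, Bf c k (g j)},
      Bf c k t ≤ z := by
    rintro z ⟨g, hg, hsum, rfl⟩
    have := Bf_sum c k (Finset.univ.erase i) g hg (by rw [hsum]; exact ht1)
    rwa [hsum] at this
  exact le_antisymm (csInf_le ⟨Bf c k t, hlb⟩ hmem) (le_csInf ⟨_, hmem⟩ hlb)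

theorem convex_price_of_anarchy_unbounded
    (N : ℕ) (hN : 2 ≤ N) (M : ℝ) (hM : 0 < M) :
    ∃ (Rs : ℝ) (lam : Fin N → ℝ → ℝ), 0 < Rs ∧
      (∀ i, (∀ t ∈ Set.Icc (0:ℝ) Rs, 0 < lam i t) ∧
        ContinuousOn (lam i) (Set.Icc 0 Rs) ∧
        StrictMonoOn (lam i) (Set.Icc 0 Rs) ∧
        ConvexOn ℝ (Set.Icc 0 Rs) (lam i)) ∧
      ∃ (B : Fin N → ℝ → ℝ) (f ropt : Fin N → ℝ),
        IsSociallyOptimal N Rs lam ropt ∧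
        IsEquilibrium N Rs lam B f ∧
        M * totalCost N lam ropt ≤ totalCost N lam f := by
  set k : ℕ := ⌈2*M⌉₊ + 1 with hkdef
  have hk0 : k ≠ 0 := by omega
  have hNR : (2:ℝ) ≤ (N:ℝ) := by exact_mod_cast hN
  have hN0 : (N:ℝ) ≠ 0 := by positivity
  set A : ℝ := (N:ℝ)^k with hAdef
  have hApos : 0 < A := by positivity
  set q : ℝ := ((k:ℝ)+1)⁻¹ with hqdef
  have hqpos : 0 < q := by positivity
  set c : ℝ := q * A⁻¹ with hcdef
  have hcpos : 0 < c := by positivity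
  set i0 : Fin N := ⟨0, by omega⟩ with hi0
  -- the flows
  set f : Fin N → ℝ := fun i => if i = i0 then (1:ℝ) else 0 with hfdef
  have hf01 : ∀ i, 0 ≤ f i ∧ f i ≤ 1 := by
    intro i; by_cases h : i = i0 <;> simp [hfdef, h]
  have hfsum : ∑ i, f i = 1 := by
    rw [hfdef]; rw [Finset.sum_ite_eq']; simp
  have htot : ∀ g : Fin N → ℝ, totalCost N (fun _ t => c + t^k) g = ∑ i, Lf c k (g i) :=
    fun g => Finset.sum_congr rfl (fun i _ => integral_lam c k (g i))
  have hLf1 : Lf c k 1 = c + q := by simp [Lf, hqdef]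
  have hdiff : ∀ s : ℝ, Bf c k 1 - Bf c k (1-s) = Lf c k s := by
    intro s
    unfold Bf
    rw [show (1:ℝ)-(1-s) = s by ring, show (1:ℝ)-1 = 0 by ring, Lf_zero]
    ring
  have hroute01 : ∀ g : Fin N → ℝ, IsRouting N 1 g → ∀ i, 0 ≤ g i ∧ g i ≤ 1 := by
    intro g hg i
    refine ⟨hg.1 i, ?_⟩
    calc g i ≤ ∑ j, g j := Finset.single_le_sum (fun j _ => hg.1 j) (Finset.mem_univ i)
    _ = 1 := hg.2
  refine ⟨1, fun _ t => c + t^k, one_pos, ?_, fun _ => Bf c k, f, fun _ => (N:ℝ)⁻¹, ?_, ?_, ?_⟩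
  · -- properties of lam
    intro i
    refine ⟨fun t ht => by show 0 < c + t^k; nlinarith [pow_nonneg ht.1 k], ?_, ?_, ?_⟩
    · exact (continuous_const.add (continuous_pow k)).continuousOn
    · intro x hx y hy hxy
      have : x^k < y^k := pow_lt_pow_left₀ hxy hx.1 hk0
      show c + x^k < c + y^k
      linarith
    · exact (convexOn_const c (convex_Icc _ _)).add
        ((convexOn_pow k).subset Set.Icc_subset_Ici_self (convex_Icc _ _))
  · -- socially optimal
    have hrop : IsRouting N 1 (fun _ => (N:ℝ)⁻¹) := by
      constructor
      · intro i; positivity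
      · rw [Finset.sum_const, Finset.card_univ, Fintype.card_fin, nsmul_eq_mul]
        field_simp
    refine ⟨hrop, ?_⟩
    intro g hg
    rw [htot, htot]
    have hconv : ConvexOn ℝ (Set.Icc (0:ℝ) 1) (Lf c k) := by
      have h1 : ConvexOn ℝ (Set.Icc (0:ℝ) 1) (fun x : ℝ => x^(k+1)) :=
        (convexOn_pow (k+1)).subset Set.Icc_subset_Ici_self (convex_Icc _ _)
      have h2 := h1.smul hqpos.le
      have h3 := (convexOn_id (convex_Icc (0:ℝ) 1)).smul hcpos.le
      have h4 := h3.add h2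
      have h5 : Lf c k = ((fun x => c • id x) + fun x => q • x ^ (k + 1)) := by
        funext x
        simp [Lf, smul_eq_mul, hqdef]
      rw [h5]
      exact h4
    have hJ := hconv.map_sum_le (t := Finset.univ) (w := fun _ => (N:ℝ)⁻¹) (p := g)
      (fun i _ => by positivity)
      (by rw [Finset.sum_const, Finset.card_univ, Fintype.card_fin, nsmul_eq_mul]; field_simp)
      (fun i _ => ⟨(hroute01 g hg i).1, (hroute01 g hg i).2⟩)
    have e1 : (∑ i : Fin N, (N:ℝ)⁻¹ • g i) = (N:ℝ)⁻¹ := by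
      rw [← Finset.smul_sum, hg.2]; simp
    rw [e1] at hJ
    have e2 : (∑ i : Fin N, (N:ℝ)⁻¹ • Lf c k (g i)) = (N:ℝ)⁻¹ * ∑ i, Lf c k (g i) := by
      rw [← Finset.smul_sum]; simp [smul_eq_mul]
    rw [e2] at hJ
    have e3 : (∑ _i : Fin N, Lf c k (N:ℝ)⁻¹) = (N:ℝ) * Lf c k (N:ℝ)⁻¹ := by
      rw [Finset.sum_const, Finset.card_univ, Fintype.card_fin, nsmul_eq_mul]
    rw [e3]
    have hNpos : (0:ℝ) < N := by positivity
    calc (N:ℝ) * Lf c k (N:ℝ)⁻¹ ≤ (N:ℝ) * ((N:ℝ)⁻¹ * ∑ i, Lf c k (g i)) := by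
          exact mul_le_mul_of_nonneg_left hJ hNpos.le
    _ = ∑ i, Lf c k (g i) := by field_simp
  · -- equilibrium
    refine ⟨?_, ⟨fun i => (hf01 i).1, hfsum⟩, ?_, ?_, ?_, ?_⟩
    · -- pricing profile
      intro i
      refine ⟨?_, ?_, Bf_zero c k⟩
      · have : Continuous (Bf c k) := by unfold Bf Lf; fun_prop
        exact this.continuousOn
      · intro a ha b hb hab
        show Bf c k a ≤ Bf c k b
        unfold Bf
        have h1 : Lf c k (1-b) ≤ Lf c k (1-a) := by
          unfold Lf
          have h2 : (1-b)^(k+1) ≤ (1-a)^(k+1) :=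
            pow_le_pow_left₀ (by linarith [hb.2]) (by linarith) _
          nlinarith
        linarith
    · -- cost minimality of f among routings
      intro g hg
      have hsum : ∑ i, Bf c k (f i) = Bf c k 1 := by
        rw [hfdef]
        rw [show (∑ i, Bf c k (if i = i0 then (1:ℝ) else 0)) =
          ∑ i, (if i = i0 then Bf c k 1 else 0) from
          Finset.sum_congr rfl (fun j _ => by by_cases h : j = i0 <;> simp [h, Bf_zero]),
          Finset.sum_ite_eq']
        simp
      rw [hsum]
      have := Bf_sum c k Finset.univ g hg.1 (le_of_eq hg.2)
      rwa [hg.2] at this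
    · -- condition (ii) inequality
      intro i t ht
      rw [Bhat_eq hN c k i (by norm_num) (le_refl 1),
        Bhat_eq hN c k i (by linarith [ht.2]) (by linarith [ht.1])]
      have := Bf_pair c k ht.1 (by linarith [ht.2] : (0:ℝ) ≤ 1 - t) (by linarith)
      rw [show t + (1-t) = (1:ℝ) by ring] at this
      linarith
    · -- condition (ii) equality at f
      intro i
      rw [Bhat_eq hN c k i (by norm_num) (le_refl 1),
        Bhat_eq hN c k i (by linarith [(hf01 i).2]) (by linarith [(hf01 i).1])]
      rw [hdiff (f i)]
      show Bf c k (f i) = Lf c k (f i)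
      by_cases h : i = i0
      · simp [hfdef, h, Bf, Lf_zero]
      · simp [hfdef, h, Bf_zero, Lf_zero]
    · -- condition (iii)
      intro i t ht
      rw [Bhat_eq hN c k i (by norm_num) (le_refl 1),
        Bhat_eq hN c k i (by linarith [ht.2]) (by linarith [ht.1]),
        Bhat_eq hN c k i (by linarith [(hf01 i).2]) (by linarith [(hf01 i).1]),
        hdiff, hdiff, integral_lam, integral_lam]
      simp
  · -- the price of anarchy bound
    rw [htot, htot]
    have hfcost : (∑ i, Lf c k (f i)) = Lf c k 1 := by
      rw [hfdef]
      rw [show (∑ i, Lf c k (if i = i0 then (1:ℝ) else 0)) =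
        ∑ i, (if i = i0 then Lf c k 1 else 0) from
        Finset.sum_congr rfl (fun j _ => by by_cases h : j = i0 <;> simp [h, Lf_zero]),
        Finset.sum_ite_eq']
      simp
    have hocost : (∑ _i : Fin N, Lf c k (N:ℝ)⁻¹) = 2 * c := by
      rw [Finset.sum_const, Finset.card_univ, Fintype.card_fin, nsmul_eq_mul]
      unfold Lf
      rw [hcdef, hAdef, ← hqdef, inv_pow]
      field_simp
      ring
    rw [hfcost, hocost, hLf1]
    have h1 : 2*M ≤ (⌈2*M⌉₊:ℝ) := Nat.le_ceil _
    have h2 : ((⌈2*M⌉₊:ℝ)) ≤ (k:ℝ) := by exact_mod_cast Nat.le_succ _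
    have h3 : (k:ℝ) ≤ (2:ℝ)^k := by exact_mod_cast (Nat.lt_two_pow_self (n := k)).le
    have h4 : (2:ℝ)^k ≤ A := pow_le_pow_left₀ (by norm_num) hNR k
    have hA2M : 2*M ≤ A := by linarith
    calc M * (2*c) = (2*M) * (q * A⁻¹) := by rw [hcdef]; ring
    _ ≤ A * (q * A⁻¹) := mul_le_mul_of_nonneg_right hA2M (by positivity)
    _ = q := by field_simp
    _ ≤ c + q := by linarith
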